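/- Let a, b, ε be real with 0 ≤ a < b ≤ 1 and 0 < ε < 1. There exists n = O(log(1/ε)/(b-a)²) and a threshold k = ⌈n(a+b)/2⌉ such that: (i) if Y_1,...,Y_n are i.i.d. Bernoulli(q) with q ≥ b, then Pr[∑ Y_i ≥ k] ≥ 1 - ε; and (ii) if X_1,...,X_n are Boolean random variables with Pr[∀ i∈S, X_i=1] ≤ a^{|S|} for all S, then Pr[∑ X_i ≥ k] ≤ ε. -/

import Mathlib

open MeasureTheory Real ProbabilityTheory

lemma bern_mgf_le (θ : ℝ) (h0 : 0 ≤ θ) (h1 : θ ≤ 1) (t : ℝ) :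
    1 - θ + θ * Real.exp t ≤ Real.exp (θ * t + t ^ 2 / 8) := by
  have hd : ∀ s : ℝ, 0 < 1 - θ + θ * exp s := by
    intro s
    rcases eq_or_lt_of_le h1 with h | h
    · rw [h]; simpa using exp_pos s
    · nlinarith [exp_pos s, mul_nonneg h0 (exp_pos s).le]
  set F : ℝ → ℝ := fun s => log (1 - θ + θ * exp s) - θ * s - s ^ 2 / 8 with hF
  set G : ℝ → ℝ := fun s => θ * exp s / (1 - θ + θ * exp s) - θ - s / 4 with hG
  have hdbase : ∀ s : ℝ, HasDerivAt (fun s => 1 - θ + θ * exp s) (θ * exp s) s := by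
    intro s
    simpa using ((Real.hasDerivAt_exp s).const_mul θ).const_add (1 - θ)
  have hdF : ∀ s, HasDerivAt F (G s) s := by
    intro s
    have h2' := (hdbase s).log (hd s).ne'
    have h3' : HasDerivAt (fun s : ℝ => θ * s) θ s := by
      simpa using (hasDerivAt_id s).const_mul θ
    have h4' : HasDerivAt (fun s : ℝ => s ^ 2 / 8) (s / 4) s := by
      have := (hasDerivAt_pow 2 s).div_const 8
      refine this.congr_deriv ?_
      ring
    exact (h2'.sub h3').sub h4'
  have hdG : ∀ s, HasDerivAt G
      (θ * exp s * (1 - θ) / (1 - θ + θ * exp s) ^ 2 - 1 / 4) s := by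
    intro s
    have h2' : HasDerivAt (fun s => θ * exp s) (θ * exp s) s :=
      (Real.hasDerivAt_exp s).const_mul θ
    have hdiv := h2'.div (hdbase s) (hd s).ne'
    have h5' : HasDerivAt (fun s : ℝ => s / 4) (1 / 4) s := by
      simpa using (hasDerivAt_id s).div_const 4
    have := (hdiv.sub_const θ).sub h5'
    refine this.congr_deriv ?_
    have hne := (hd s).ne'
    field_simp
    ring
  have hGanti : Antitone G := by
    apply antitone_of_deriv_nonpos (fun s => (hdG s).differentiableAt)
    intro s
    rw [(hdG s).deriv]
    have hds := hd s
    have hx : (0:ℝ) < (1 - θ + θ * exp s) ^ 2 := by positivity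
    rw [sub_nonpos, div_le_iff₀ hx]
    nlinarith [sq_nonneg (1 - θ - θ * exp s)]
  have hG0 : G 0 = 0 := by
    simp [hG]
  have hF0 : F 0 = 0 := by
    have h10 : 1 - θ + θ * exp 0 = 1 := by simp
    simp [hF, h10]
  have hFd : Differentiable ℝ F := fun s => (hdF s).differentiableAt
  have key : ∀ s, F s ≤ 0 := by
    intro s
    rcases le_total s 0 with h | h
    · have hm : MonotoneOn F (Set.Iic 0) := by
        apply monotoneOn_of_deriv_nonneg (convex_Iic 0) hFd.continuous.continuousOn
          hFd.differentiableOn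
        intro x hx
        rw [interior_Iic] at hx
        rw [(hdF x).deriv, ← hG0]
        exact hGanti (le_of_lt hx)
      have := hm (Set.mem_Iic.mpr h) (Set.mem_Iic.mpr le_rfl) h
      linarith [hF0]
    · have hm : AntitoneOn F (Set.Ici 0) := by
        apply antitoneOn_of_deriv_nonpos (convex_Ici 0) hFd.continuous.continuousOn
          hFd.differentiableOn
        intro x hx
        rw [interior_Ici] at hx
        rw [(hdF x).deriv, ← hG0]
        exact hGanti (le_of_lt hx)
      have := hm (Set.mem_Ici.mpr le_rfl) (Set.mem_Ici.mpr h) h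
      linarith [hF0]
  have := key t
  rw [hF] at this
  simp only at this
  have hlog : log (1 - θ + θ * exp t) ≤ θ * t + t ^ 2 / 8 := by linarith
  calc 1 - θ + θ * exp t = exp (log (1 - θ + θ * exp t)) := (exp_log (hd t)).symm
    _ ≤ exp (θ * t + t ^ 2 / 8) := exp_le_exp.mpr hlog

lemma meas_setOf_toReal {Ω : Type} [Fintype Ω] [MeasurableSpace Ω] [MeasurableSingletonClass Ω]
    (μ : Measure Ω) [IsFiniteMeasure μ] (P : Ω → Prop) [DecidablePred P] :
    (μ {ω | P ω}).toReal = ∑ ω ∈ Finset.univ.filter (fun ω => P ω), (μ {ω}).toReal := by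
  have h1 : {ω | P ω} = ⋃ x ∈ Finset.univ.filter (fun ω => P ω), ({x} : Set Ω) := by
    ext ω; simp
  rw [h1, measure_biUnion_finset ?_ (fun b _ => measurableSet_singleton b),
    ENNReal.toReal_sum (fun a _ => measure_ne_top μ _)]
  intro x _ y _ hxy
  simp only [Function.onFun, Set.disjoint_singleton]
  exact hxy

lemma integral_bool_rv {Ω : Type} [Fintype Ω] [MeasurableSpace Ω] [MeasurableSingletonClass Ω]
    (μ : Measure Ω) [IsProbabilityMeasure μ] (V : Ω → ℕ) (hV : ∀ ω, V ω = 0 ∨ V ω = 1) :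
    ∫ ω, (V ω : ℝ) ∂μ = (μ {ω | V ω = 1}).toReal := by
  classical
  rw [integral_fintype (Integrable.of_finite), meas_setOf_toReal μ (fun ω => V ω = 1)]
  rw [Finset.sum_filter]
  apply Finset.sum_congr rfl
  intro x _
  rcases hV x with h | h <;> simp [h, Measure.real]

lemma mgf_bern {Ω : Type} [Fintype Ω] [MeasurableSpace Ω] [MeasurableSingletonClass Ω]
    (μ : Measure Ω) [IsProbabilityMeasure μ] (V : Ω → ℕ) (hV : ∀ ω, V ω = 0 ∨ V ω = 1) (t : ℝ) :
    mgf (fun ω => (V ω : ℝ)) μ t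
      = 1 - (μ {ω | V ω = 1}).toReal + (μ {ω | V ω = 1}).toReal * Real.exp t := by
  have hpt : (fun ω => Real.exp (t * (V ω : ℝ)))
      = fun ω => 1 + (Real.exp t - 1) * (V ω : ℝ) := by
    funext ω
    rcases hV ω with h | h <;> simp [h]
  rw [mgf, hpt]
  rw [integral_add (integrable_const 1) (Integrable.of_finite), integral_const,
    integral_const_mul, integral_bool_rv μ V hV]
  simp [measure_univ]
  ring

lemma completeness_aux {Ω : Type} [Fintype Ω] [MeasurableSpace Ω] [MeasurableSingletonClass Ω]
    (μ : Measure Ω) [IsProbabilityMeasure μ]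
    {n k : ℕ} (hn : 0 < n) (Y : Fin n → Ω → ℕ) (hY01 : ∀ i ω, Y i ω = 0 ∨ Y i ω = 1)
    (hind : iIndepFun Y μ)
    {q δ ε : ℝ} (hδ : 0 < δ)
    (hq : ∀ i, (μ {ω | Y i ω = 1}).toReal = q)
    (hexp : Real.exp (4*δ*((k:ℝ)-1) - 4*δ*(n:ℝ)*q + 2*(n:ℝ)*δ^2) ≤ ε) :
    1 - ε ≤ (μ {ω | k ≤ ∑ i, Y i ω}).toReal := by
  classical
  have hq0 : 0 ≤ q := by rw [← hq ⟨0, hn⟩]; exact ENNReal.toReal_nonneg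
  have hq1 : q ≤ 1 := by
    rw [← hq ⟨0, hn⟩]
    have h := ENNReal.toReal_mono (show (1:ENNReal) ≠ ⊤ by simp)
      (prob_le_one (μ := μ) (s := {ω | Y ⟨0, hn⟩ ω = 1}))
    simpa using h
  set Z : Fin n → Ω → ℝ := fun i ω => (Y i ω : ℝ) with hZ
  have hZmeas : ∀ i, Measurable (Z i) := fun i => measurable_of_finite _
  have hindZ : iIndepFun Z μ :=
    hind.comp (fun _ (m : ℕ) => (m : ℝ)) (fun _ => measurable_of_countable _)
  set t : ℝ := -(4*δ) with ht
  have ht0 : t ≤ 0 := by rw [ht]; linarith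
  set W : Ω → ℝ := ∑ i, Z i with hW
  have hWapp : ∀ ω, W ω = ((∑ i, Y i ω : ℕ) : ℝ) := by
    intro ω
    rw [hW, Finset.sum_apply]
    push_cast
    rfl
  have hmgf : mgf W μ t ≤ Real.exp ((n:ℝ) * (q * t + t^2/8)) := by
    rw [hW, hindZ.mgf_sum hZmeas Finset.univ]
    calc ∏ i, mgf (Z i) μ t ≤ ∏ _i : Fin n, Real.exp (q * t + t^2/8) := by
          apply Finset.prod_le_prod (fun i _ => mgf_nonneg)
          intro i _
          rw [hZ]
          rw [mgf_bern μ (Y i) (hY01 i) t, hq i]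
          exact bern_mgf_le q hq0 hq1 t
      _ = Real.exp ((n:ℝ) * (q * t + t^2/8)) := by
          rw [Finset.prod_const, Finset.card_univ, Fintype.card_fin, ← Real.exp_nat_mul]
  have hcher : (μ {ω | W ω ≤ (k:ℝ) - 1}).toReal
      ≤ Real.exp (-t * ((k:ℝ)-1)) * mgf W μ t :=
    measure_le_le_exp_mul_mgf _ ht0 (Integrable.of_finite)
  have hbound : (μ {ω | W ω ≤ (k:ℝ) - 1}).toReal ≤ ε := by
    refine le_trans (hcher.trans ?_) hexp
    calc Real.exp (-t * ((k:ℝ)-1)) * mgf W μ t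
        ≤ Real.exp (-t * ((k:ℝ)-1)) * Real.exp ((n:ℝ) * (q * t + t^2/8)) := by
          exact mul_le_mul_of_nonneg_left hmgf (Real.exp_pos _).le
      _ = Real.exp (4*δ*((k:ℝ)-1) - 4*δ*(n:ℝ)*q + 2*(n:ℝ)*δ^2) := by
          rw [← Real.exp_add]
          congr 1
          rw [ht]
          ring
  have hcompl : {ω | k ≤ ∑ i, Y i ω} = {ω | W ω ≤ (k:ℝ) - 1}ᶜ := by
    ext ω
    simp only [Set.mem_setOf_eq, Set.mem_compl_iff, not_le, hWapp ω]
    constructor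
    · intro h
      have : (k:ℝ) ≤ ((∑ i, Y i ω : ℕ) : ℝ) := by exact_mod_cast h
      linarith
    · intro h
      by_contra hcon
      push_neg at hcon
      have : (∑ i, Y i ω) + 1 ≤ k := hcon
      have : ((∑ i, Y i ω : ℕ) : ℝ) + 1 ≤ (k : ℝ) := by exact_mod_cast this
      linarith
  have hA : MeasurableSet {ω | W ω ≤ (k:ℝ) - 1} := (Set.toFinite _).measurableSet
  have hsum : (μ {ω | W ω ≤ (k:ℝ) - 1}).toReal + (μ {ω | W ω ≤ (k:ℝ) - 1}ᶜ).toReal = 1 := by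
    rw [← ENNReal.toReal_add (measure_ne_top _ _) (measure_ne_top _ _),
      measure_add_measure_compl hA, measure_univ, ENNReal.toReal_one]
  rw [hcompl]
  linarith

lemma soundness_aux {Ω : Type} [Fintype Ω] [MeasurableSpace Ω] [MeasurableSingletonClass Ω]
    (μ : Measure Ω) [IsProbabilityMeasure μ]
    {n k : ℕ} (hkn : k ≤ n) (X : Fin n → Ω → ℕ) (hX01 : ∀ i ω, X i ω = 0 ∨ X i ω = 1)
    {a δ ε : ℝ} (ha : 0 ≤ a) (ha1 : a ≤ 1) (hδ : 0 < δ)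
    (hsub : ∀ S : Finset (Fin n), (μ {ω | ∀ i ∈ S, X i ω = 1}).toReal ≤ a ^ S.card)
    (hexp : Real.exp ((n:ℝ) * ((1-a) * (-(4*δ)) + (-(4*δ))^2/8) + 4*δ*((n:ℝ)-(k:ℝ))) ≤ ε) :
    (μ {ω | k ≤ ∑ i, X i ω}).toReal ≤ ε := by
  classical
  set p : ℝ := 1 - Real.exp (-(4*δ)) with hp
  have h1p : 1 - p = Real.exp (-(4*δ)) := by rw [hp]; ring
  have hep : (0:ℝ) < 1 - p := by rw [h1p]; exact Real.exp_pos _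
  have hp0 : 0 ≤ p := by
    rw [hp]
    have h := Real.exp_lt_exp.mpr (show -(4*δ) < 0 by linarith)
    rw [Real.exp_zero] at h
    linarith
  have hp1 : p ≤ 1 := by rw [hp]; linarith [Real.exp_pos (-(4*δ))]
  set w : Ω → ℝ := fun ω => (μ {ω}).toReal with hw
  have hw0 : ∀ ω, 0 ≤ w ω := fun ω => ENNReal.toReal_nonneg
  set T : Ω → Finset (Fin n) := fun ω => Finset.univ.filter (fun i => X i ω = 1) with hT
  have hTcard : ∀ ω, (T ω).card = ∑ i, X i ω := by
    intro ω
    rw [hT]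
    simp only
    rw [Finset.card_filter]
    apply Finset.sum_congr rfl
    intro i _
    rcases hX01 i ω with h | h <;> simp [h]
  -- sum of coefficients over a powerset
  have hcoefsum : ∀ u : Finset (Fin n),
      ∑ S ∈ u.powerset, p ^ S.card * (1-p) ^ (n - S.card) = (1-p) ^ (n - u.card) := by
    intro u
    have hun : u.card ≤ n := le_trans (Finset.card_le_univ u) (by simp)
    have h1 : ∀ S ∈ u.powerset, p ^ S.card * (1-p) ^ (n - S.card)
        = (1-p) ^ (n - u.card) * (p ^ S.card * (1-p) ^ (u.card - S.card)) := by
      intro S hS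
      have h2 : S.card ≤ u.card := Finset.card_le_card (Finset.mem_powerset.mp hS)
      have h3 : n - S.card = (n - u.card) + (u.card - S.card) := by omega
      rw [h3, pow_add]
      ring
    rw [Finset.sum_congr rfl h1, ← Finset.mul_sum]
    have h4 : ∑ S ∈ u.powerset, p ^ S.card * (1-p) ^ (u.card - S.card) = 1 := by
      have h5 := Finset.prod_add (fun _ : Fin n => p) (fun _ => 1-p) u
      have h6 : ∀ S ∈ u.powerset, (∏ _i ∈ S, p) * ∏ _i ∈ u \ S, (1-p)
          = p ^ S.card * (1-p) ^ (u.card - S.card) := by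
        intro S hS
        rw [Finset.prod_const, Finset.prod_const,
          Finset.card_sdiff_of_subset (Finset.mem_powerset.mp hS)]
      rw [Finset.sum_congr rfl h6] at h5
      rw [← h5]
      have : ∀ _i ∈ u, p + (1-p) = (1:ℝ) := fun _ _ => by ring
      rw [Finset.prod_congr rfl this, Finset.prod_const_one]
    rw [h4, mul_one]
  -- main chain
  have hmeas : (μ {ω | k ≤ ∑ i, X i ω}).toReal
      = ∑ ω ∈ Finset.univ.filter (fun ω => k ≤ ∑ i, X i ω), w ω :=
    meas_setOf_toReal μ _
  have key : (1-p) ^ (n-k) * (μ {ω | k ≤ ∑ i, X i ω}).toReal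
      ≤ ∑ S ∈ (Finset.univ : Finset (Fin n)).powerset,
          (p ^ S.card * (1-p) ^ (n - S.card)) * a ^ S.card := by
    rw [hmeas, Finset.mul_sum]
    calc ∑ ω ∈ Finset.univ.filter (fun ω => k ≤ ∑ i, X i ω), (1-p) ^ (n-k) * w ω
        ≤ ∑ ω ∈ Finset.univ.filter (fun ω => k ≤ ∑ i, X i ω),
            (1-p) ^ (n - (T ω).card) * w ω := by
          apply Finset.sum_le_sum
          intro ω hω
          have hωk : k ≤ ∑ i, X i ω := (Finset.mem_filter.mp hω).2
          have hT1 : k ≤ (T ω).card := by rw [hTcard ω]; exact hωk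
          exact mul_le_mul_of_nonneg_right
            (pow_le_pow_of_le_one hep.le (by linarith) (by omega)) (hw0 ω)
      _ ≤ ∑ ω, (1-p) ^ (n - (T ω).card) * w ω := by
          apply Finset.sum_le_sum_of_subset_of_nonneg (Finset.filter_subset _ _)
          intro ω _ _
          exact mul_nonneg (pow_nonneg hep.le _) (hw0 ω)
      _ = ∑ ω, ∑ S ∈ (Finset.univ : Finset (Fin n)).powerset,
            (if S ⊆ T ω then (p ^ S.card * (1-p) ^ (n - S.card)) * w ω else 0) := by
          apply Finset.sum_congr rfl
          intro ω _
          rw [← hcoefsum (T ω)]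
          have hps : (T ω).powerset
              = (Finset.univ : Finset (Fin n)).powerset.filter (fun S => S ⊆ T ω) := by
            ext S
            simp [Finset.mem_powerset]
          rw [hps, Finset.sum_filter, Finset.sum_mul]
          apply Finset.sum_congr rfl
          intro S _
          by_cases h : S ⊆ T ω <;> simp [h]
      _ = ∑ S ∈ (Finset.univ : Finset (Fin n)).powerset,
            ∑ ω, (if S ⊆ T ω then (p ^ S.card * (1-p) ^ (n - S.card)) * w ω else 0) :=
          Finset.sum_comm
      _ ≤ ∑ S ∈ (Finset.univ : Finset (Fin n)).powerset,
            (p ^ S.card * (1-p) ^ (n - S.card)) * a ^ S.card := by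
          apply Finset.sum_le_sum
          intro S _
          have hset : (μ {ω | ∀ i ∈ S, X i ω = 1}).toReal
              = ∑ ω ∈ Finset.univ.filter (fun ω => ∀ i ∈ S, X i ω = 1), w ω :=
            meas_setOf_toReal μ _
          have hiff : ∀ ω, (∀ i ∈ S, X i ω = 1) ↔ S ⊆ T ω := by
            intro ω
            simp [hT, Finset.subset_iff]
          calc ∑ ω, (if S ⊆ T ω then (p ^ S.card * (1-p) ^ (n - S.card)) * w ω else 0)
              = (p ^ S.card * (1-p) ^ (n - S.card))
                  * (μ {ω | ∀ i ∈ S, X i ω = 1}).toReal := by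
                rw [hset, Finset.mul_sum, Finset.sum_filter]
                apply Finset.sum_congr rfl
                intro ω _
                by_cases h : S ⊆ T ω
                · rw [if_pos h, if_pos ((hiff ω).mpr h)]
                · rw [if_neg h, if_neg (fun hcon => h ((hiff ω).mp hcon))]
            _ ≤ (p ^ S.card * (1-p) ^ (n - S.card)) * a ^ S.card := by
                exact mul_le_mul_of_nonneg_left (hsub S)
                  (mul_nonneg (pow_nonneg hp0 _) (pow_nonneg hep.le _))
  -- identify the RHS with (p*a + (1-p))^n and bound it
  have hA : ∑ S ∈ (Finset.univ : Finset (Fin n)).powerset,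
      (p ^ S.card * (1-p) ^ (n - S.card)) * a ^ S.card = (p*a + (1-p)) ^ n := by
    have h5 := Finset.prod_add (fun _ : Fin n => p*a) (fun _ => 1-p) Finset.univ
    rw [Finset.prod_const, Finset.card_univ, Fintype.card_fin] at h5
    rw [h5]
    apply Finset.sum_congr rfl
    intro S hS
    rw [Finset.prod_const, Finset.prod_const,
      Finset.card_sdiff_of_subset (Finset.subset_univ S), Finset.card_univ, Fintype.card_fin,
      mul_pow]
    ring
  have hbern : (p*a + (1-p)) ^ n
      ≤ Real.exp ((n:ℝ) * ((1-a) * (-(4*δ)) + (-(4*δ))^2/8)) := by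
    have h6 : p*a + (1-p) = 1 - (1-a) + (1-a) * Real.exp (-(4*δ)) := by
      rw [h1p, hp]; ring
    have h7 := bern_mgf_le (1-a) (by linarith) (by linarith) (-(4*δ))
    rw [← h6] at h7
    calc (p*a + (1-p)) ^ n ≤ (Real.exp ((1-a) * (-(4*δ)) + (-(4*δ))^2/8)) ^ n := by
          apply pow_le_pow_left₀ ?_ h7
          rw [h6]
          have h8 : 0 ≤ (1-a) * Real.exp (-(4*δ)) :=
            mul_nonneg (by linarith) (Real.exp_pos _).le
          linarith
      _ = Real.exp ((n:ℝ) * ((1-a) * (-(4*δ)) + (-(4*δ))^2/8)) := by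
          rw [← Real.exp_nat_mul]
  -- conclude
  have hpowpos : (0:ℝ) < (1-p) ^ (n-k) := pow_pos hep _
  rw [← mul_le_mul_iff_of_pos_right hpowpos]
  calc (μ {ω | k ≤ ∑ i, X i ω}).toReal * (1-p) ^ (n-k)
      ≤ Real.exp ((n:ℝ) * ((1-a) * (-(4*δ)) + (-(4*δ))^2/8)) := by
        rw [mul_comm]
        exact le_trans key (le_of_eq_of_le hA hbern)
    _ ≤ ε * (1-p) ^ (n-k) := by
        rw [h1p, ← Real.exp_nat_mul]
        have hcast : ((n - k : ℕ) : ℝ) = (n:ℝ) - (k:ℝ) := Nat.cast_sub hkn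
        calc Real.exp ((n:ℝ) * ((1-a) * (-(4*δ)) + (-(4*δ))^2/8))
            = Real.exp ((n:ℝ) * ((1-a) * (-(4*δ)) + (-(4*δ))^2/8) + 4*δ*((n:ℝ)-(k:ℝ)))
              * Real.exp (((n - k : ℕ) : ℝ) * (-(4*δ))) := by
              rw [← Real.exp_add, hcast]
              ring_nf
          _ ≤ ε * Real.exp (((n - k : ℕ) : ℝ) * (-(4*δ))) :=
              mul_le_mul_of_nonneg_right hexp (Real.exp_pos _).le


theorem error_reduction_parallel_repetition
    (a b ε : ℝ) (ha : 0 ≤ a) (hab : a < b) (hb : b ≤ 1)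
    (hε0 : 0 < ε) (hε1 : ε < 1) :
    ∃ (n k : ℕ), (n : ℝ) ≤ 2 * Real.log (1 / ε) / (b - a) ^ 2 + 1 ∧
      k = ⌈(n : ℝ) * (a + b) / 2⌉₊ ∧
      (∀ (Ω : Type) [Fintype Ω] [MeasurableSpace Ω] [MeasurableSingletonClass Ω]
        (μ : Measure Ω) [IsProbabilityMeasure μ]
        (Y : Fin n → Ω → ℕ), (∀ i ω, Y i ω = 0 ∨ Y i ω = 1) →
        iIndepFun Y μ →
        ∀ q : ℝ, b ≤ q → (∀ i, (μ {ω | Y i ω = 1}).toReal = q) →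
        1 - ε ≤ (μ {ω | k ≤ ∑ i, Y i ω}).toReal) ∧
      (∀ (Ω : Type) [Fintype Ω] [MeasurableSpace Ω] [MeasurableSingletonClass Ω]
        (μ : Measure Ω) [IsProbabilityMeasure μ]
        (X : Fin n → Ω → ℕ), (∀ i ω, X i ω = 0 ∨ X i ω = 1) →
        (∀ S : Finset (Fin n),
          (μ {ω | ∀ i ∈ S, X i ω = 1}).toReal ≤ a ^ S.card) →
        (μ {ω | k ≤ ∑ i, X i ω}).toReal ≤ ε) := by
  have hb0 : 0 < b := lt_of_le_of_lt ha hab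
  have ha1 : a ≤ 1 := le_trans hab.le hb
  have hba : 0 < b - a := by linarith
  set δ : ℝ := (b - a) / 2 with hδdef
  have hδ : 0 < δ := by rw [hδdef]; linarith
  set L : ℝ := Real.log (1 / ε) with hL
  have hL0 : 0 < L := Real.log_pos (one_lt_one_div hε0 hε1)
  have hLε : L = -Real.log ε := by rw [hL, one_div, Real.log_inv]
  have hnpos : 0 < 2 * L / (b - a) ^ 2 := by positivity
  set n : ℕ := ⌈2 * L / (b - a) ^ 2⌉₊ with hn
  have hn1 : 0 < n := Nat.ceil_pos.mpr hnpos
  have hnle : (n : ℝ) ≤ 2 * L / (b - a) ^ 2 + 1 := (Nat.ceil_lt_add_one hnpos.le).le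
  have hnge : 2 * L / (b - a) ^ 2 ≤ (n : ℝ) := Nat.le_ceil _
  have hn0 : (0:ℝ) ≤ (n:ℝ) := Nat.cast_nonneg n
  set k : ℕ := ⌈(n : ℝ) * (a + b) / 2⌉₊ with hk
  have hcpos : (0:ℝ) < (n : ℝ) * (a + b) / 2 := by
    have : (0:ℝ) < (n:ℝ) := by exact_mod_cast hn1
    nlinarith
  have hk_ge : (n : ℝ) * (a + b) / 2 ≤ (k : ℝ) := Nat.le_ceil _
  have hk_lt : (k : ℝ) < (n : ℝ) * (a + b) / 2 + 1 := Nat.ceil_lt_add_one hcpos.le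
  have hkn : k ≤ n := by
    rw [hk]
    apply Nat.ceil_le.mpr
    nlinarith
  have hkey : -(2 * (n:ℝ) * δ ^ 2) ≤ Real.log ε := by
    have h1 : L ≤ (n:ℝ) * (b - a) ^ 2 / 2 := by
      rw [div_le_iff₀ (by positivity)] at hnge
      linarith
    have h2 : (n:ℝ) * (b-a)^2 / 2 = 2 * (n:ℝ) * δ^2 := by rw [hδdef]; ring
    rw [hLε] at h1
    linarith [h2 ▸ h1]
  refine ⟨n, k, hnle, rfl, ?_, ?_⟩
  · intro Ω _ _ _ μ _ Y hY01 hind q hqb hq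
    apply completeness_aux μ hn1 Y hY01 hind hδ hq
    have harith : 4*δ*((k:ℝ)-1) - 4*δ*(n:ℝ)*q + 2*(n:ℝ)*δ^2 ≤ Real.log ε := by
      have hbδ : b = (a+b)/2 + δ := by rw [hδdef]; ring
      have h3 : 4*δ*((k:ℝ)-1) - 4*δ*(n:ℝ)*q + 2*(n:ℝ)*δ^2 ≤ -(2*(n:ℝ)*δ^2) := by
        have hq' : (a+b)/2 + δ ≤ q := by rw [← hbδ]; exact hqb
        nlinarith [mul_pos hδ (show (0:ℝ) < (n:ℝ) by exact_mod_cast hn1)]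
      linarith [hkey]
    calc Real.exp (4*δ*((k:ℝ)-1) - 4*δ*(n:ℝ)*q + 2*(n:ℝ)*δ^2)
        ≤ Real.exp (Real.log ε) := Real.exp_le_exp.mpr harith
      _ = ε := Real.exp_log hε0
  · intro Ω _ _ _ μ _ X hX01 hsub
    apply soundness_aux μ hkn X hX01 ha ha1 hδ hsub
    have harith : (n:ℝ) * ((1-a) * (-(4*δ)) + (-(4*δ))^2/8) + 4*δ*((n:ℝ)-(k:ℝ))
        ≤ Real.log ε := by
      have h3 : (n:ℝ) * ((1-a) * (-(4*δ)) + (-(4*δ))^2/8) + 4*δ*((n:ℝ)-(k:ℝ))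
          ≤ -(2*(n:ℝ)*δ^2) := by
        have hk' : (n:ℝ) * (a + δ) ≤ (k:ℝ) := by
          have : (n:ℝ) * (a + δ) = (n:ℝ) * (a+b) / 2 := by rw [hδdef]; ring
          linarith [hk_ge, this ▸ le_refl ((n:ℝ) * (a + δ))]
        nlinarith
      linarith [hkey]
    calc Real.exp ((n:ℝ) * ((1-a) * (-(4*δ)) + (-(4*δ))^2/8) + 4*δ*((n:ℝ)-(k:ℝ)))
        ≤ Real.exp (Real.log ε) := Real.exp_le_exp.mpr harith
      _ = ε := Real.exp_log hε0
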